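/- Define H(t, p, q) = G(1/(3p), p, p) + G(1/(3q), q, q) − 2·G(t, p, q). Then H(t, p, q) ≥ 0 for all t, p, q ∈ (0, ∞), and H(t, p, q) = 0 if and only if p = q and t = 1/(3p). -/

import Mathlib

open Real

/-- `S₀(t) = 8t³/(1+t²)³`, the spherical candle function in the variable `t = tan(ℓ/2)`. -/
noncomputable def sphS0 (t : ℝ) : ℝ := 8 * t ^ 3 / (1 + t ^ 2) ^ 3

/-- `S₋₁(t) = 4t⁴(3+t²)/(3(1+t²)³)`. -/
noncomputable def sphSm1 (t : ℝ) : ℝ := 4 * t ^ 4 * (3 + t ^ 2) / (3 * (1 + t ^ 2) ^ 3)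

/-- `S₋₂(t) = (4/3)·arctan t − (4/3)·t/(1+t²) − (8/9)·t³/(1+t²)³`. -/
noncomputable def sphSm2 (t : ℝ) : ℝ :=
  (4 / 3) * arctan t - (4 / 3) * t / (1 + t ^ 2) - (8 / 9) * t ^ 3 / (1 + t ^ 2) ^ 3

/-- `G(t, p, q) = (8/3)·arctan t − pq·S₀(t) − (p+q)·S₋₁(t) − S₋₂(t)`. -/
noncomputable def sphGt (t p q : ℝ) : ℝ :=
  (8 / 3) * arctan t - p * q * sphS0 t - (p + q) * sphSm1 t - sphSm2 t

/-- `H(t, p, q) = G(1/(3p), p, p) + G(1/(3q), q, q) − 2·G(t, p, q)`. -/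
noncomputable def sphH (t p q : ℝ) : ℝ :=
  sphGt (1 / (3 * p)) p p + sphGt (1 / (3 * q)) q q - 2 * sphGt t p q

/- ------------------------------------------------------------------
   Auxiliary machinery.
   ------------------------------------------------------------------ -/

/-- An antiderivative of `S₀`. -/
noncomputable def sphJ (x : ℝ) : ℝ := -(2 + 4 * x ^ 2) / (1 + x ^ 2) ^ 2

/-- `A(s,w) = ∫ₛʷ (w-ξ) S₀(ξ) dξ`, explicitly. -/
noncomputable def sphAF (s w : ℝ) : ℝ :=
  3 * arctan s - 3 * arctan w + w / (1 + w ^ 2) - s / (1 + s ^ 2) - sphJ s * (w - s)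

/-- `S₀` again (separate symbol for the reduction). -/
noncomputable def sphSS (s : ℝ) : ℝ := 8 * s ^ 3 / (1 + s ^ 2) ^ 3

/-- Rational lower-bound certificate for `A(s, s+a)`, `a ≥ 0`. -/
noncomputable def sphhx (s a : ℝ) : ℝ :=
  4 * s ^ 3 * (1 + 2 * s ^ 2) * a ^ 2 / ((1 + s ^ 2) ^ 2 * (2 * s ^ 3 * a + 2 * s ^ 4 + 3 * s ^ 2 + 1))

/-- Rational lower-bound certificate for `A(s, s-b)`, `0 ≤ b < s`. -/
noncomputable def sphhb (s b : ℝ) : ℝ :=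
  4 * s ^ 4 * b ^ 2 / ((1 + s ^ 2) ^ 2 * (2 * b + s + s ^ 3))

lemma sphAF_self (s : ℝ) : sphAF s s = 0 := by unfold sphAF; ring

lemma sphhx_zero (s : ℝ) : sphhx s 0 = 0 := by unfold sphhx; simp

lemma sphhb_zero (s : ℝ) : sphhb s 0 = 0 := by unfold sphhb; simp

lemma sphAF_hasDeriv (s w : ℝ) : HasDerivAt (fun x => sphAF s x) (sphJ w - sphJ s) w := by
  have h1 : (1 : ℝ) + w ^ 2 ≠ 0 := by positivity
  have harc : HasDerivAt arctan (1 / (1 + w ^ 2)) w := hasDerivAt_arctan w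
  have hq : HasDerivAt (fun x : ℝ => 1 + x ^ 2) (2 * w) w := by
    simpa using (hasDerivAt_pow 2 w).const_add 1
  have hdiv : HasDerivAt (fun x : ℝ => x / (1 + x ^ 2))
      ((1 * (1 + w ^ 2) - w * (2 * w)) / (1 + w ^ 2) ^ 2) w := by
    convert (hasDerivAt_id' w).div hq h1 using 1 <;> (try rfl) <;> ring
  have h2 : HasDerivAt (fun x : ℝ => 3 * arctan s - 3 * arctan x)
      (-(3 * (1 / (1 + w ^ 2)))) w := (harc.const_mul 3).const_sub (3 * arctan s)
  have h5 : HasDerivAt (fun x : ℝ => sphJ s * (x - s)) (sphJ s * 1) w :=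
    ((hasDerivAt_id w).sub_const s).const_mul (sphJ s)
  have h6 := ((h2.add hdiv).sub_const (s / (1 + s ^ 2))).sub h5
  unfold sphAF
  convert h6 using 1 <;> try rfl
  unfold sphJ
  field_simp
  ring

lemma sphAF_cont (s : ℝ) : Continuous (fun x => sphAF s x) :=
  continuous_iff_continuousAt.2 fun x => (sphAF_hasDeriv s x).continuousAt

lemma sphJ_lt {s x : ℝ} (hs : 0 < s) (hx : 0 < x) (h : s < x) : sphJ s < sphJ x := by
  have key : sphJ x - sphJ s =
      2 * (x - s) * (x ^ 3 + s * x ^ 2 + s ^ 2 * x + s ^ 3 + 2 * s ^ 2 * x ^ 3 + 2 * s ^ 3 * x ^ 2)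
        / ((1 + x ^ 2) ^ 2 * (1 + s ^ 2) ^ 2) := by
    unfold sphJ; field_simp; ring
  have h1 : 0 < x - s := sub_pos.2 h
  have h2 : 0 < x ^ 3 + s * x ^ 2 + s ^ 2 * x + s ^ 3 + 2 * s ^ 2 * x ^ 3 + 2 * s ^ 3 * x ^ 2 := by
    positivity
  have h3 : (0:ℝ) < (1 + x ^ 2) ^ 2 * (1 + s ^ 2) ^ 2 := by positivity
  have : 0 < sphJ x - sphJ s := by
    rw [key]; positivity
  linarith

lemma sphAF_pos {s w : ℝ} (hs : 0 < s) (hw : 0 < w) (hne : w ≠ s) : 0 < sphAF s w := by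
  rcases hne.lt_or_gt with hlt | hlt
  · have hanti : StrictAntiOn (fun x => sphAF s x) (Set.Icc w s) := by
      apply strictAntiOn_of_deriv_neg (convex_Icc w s) (sphAF_cont s).continuousOn
      intro x hx
      rw [interior_Icc] at hx
      rw [(sphAF_hasDeriv s x).deriv]
      have hx0 : 0 < x := lt_trans hw hx.1
      have := sphJ_lt hx0 hs hx.2
      linarith
    have := hanti (Set.left_mem_Icc.2 hlt.le) (Set.right_mem_Icc.2 hlt.le) hlt
    simpa [sphAF_self] using this
  · have hmono : StrictMonoOn (fun x => sphAF s x) (Set.Icc s w) := by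
      apply strictMonoOn_of_deriv_pos (convex_Icc s w) (sphAF_cont s).continuousOn
      intro x hx
      rw [interior_Icc] at hx
      rw [(sphAF_hasDeriv s x).deriv]
      have hx0 : 0 < x := lt_trans hs hx.1
      have := sphJ_lt hs hx0 hx.1
      linarith
    have := hmono (Set.left_mem_Icc.2 hlt.le) (Set.right_mem_Icc.2 hlt.le) hlt
    simpa [sphAF_self] using this

lemma sphAF_nonneg {s w : ℝ} (hs : 0 < s) (hw : 0 < w) : 0 ≤ sphAF s w := by
  rcases eq_or_ne w s with rfl | hne
  · rw [sphAF_self]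
  · exact (sphAF_pos hs hw hne).le

/-- Certificate inequality on the right: `hx s (w-s) ≤ A(s,w)` for `w ≥ s`. -/
lemma sphhx_le_AF {s w : ℝ} (hs : 0 < s) (h : s ≤ w) : sphhx s (w - s) ≤ sphAF s w := by
  rcases eq_or_lt_of_le h with rfl | hlt
  · simp [sphhx_zero, sphAF_self]
  · have hder : ∀ x : ℝ, s ≤ x → HasDerivAt (fun y => sphAF s y - sphhx s (y - s))
        ((sphJ x - sphJ s) -
          ((4 * s ^ 3 * (1 + 2 * s ^ 2) * (2 * (x - s))) *
              ((1 + s ^ 2) ^ 2 * (2 * s ^ 3 * (x - s) + 2 * s ^ 4 + 3 * s ^ 2 + 1)) -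
            (4 * s ^ 3 * (1 + 2 * s ^ 2) * (x - s) ^ 2) * ((1 + s ^ 2) ^ 2 * (2 * s ^ 3))) /
            ((1 + s ^ 2) ^ 2 * (2 * s ^ 3 * (x - s) + 2 * s ^ 4 + 3 * s ^ 2 + 1)) ^ 2) x := by
      intro x hxs
      have hden : 0 < 2 * s ^ 3 * (x - s) + 2 * s ^ 4 + 3 * s ^ 2 + 1 := by
        have h1 : 0 ≤ 2 * s ^ 3 * (x - s) := mul_nonneg (by positivity) (sub_nonneg.2 hxs)
        have h2 : 0 < 2 * s ^ 4 + 3 * s ^ 2 + 1 := by positivity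
        linarith
      have hu : HasDerivAt (fun y : ℝ => 4 * s ^ 3 * (1 + 2 * s ^ 2) * (y - s) ^ 2)
          (4 * s ^ 3 * (1 + 2 * s ^ 2) * (2 * (x - s))) x := by
        have := (((hasDerivAt_id' x).sub_const s).pow 2).const_mul (4 * s ^ 3 * (1 + 2 * s ^ 2))
        convert this using 1 <;> (try funext y) <;> (try simp only [id_eq]) <;>
          (try push_cast) <;> (try rfl) <;> ring
      have hv : HasDerivAt
          (fun y : ℝ => (1 + s ^ 2) ^ 2 * (2 * s ^ 3 * (y - s) + 2 * s ^ 4 + 3 * s ^ 2 + 1))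
          ((1 + s ^ 2) ^ 2 * (2 * s ^ 3)) x := by
        have := ((((hasDerivAt_id' x).sub_const s).const_mul (2 * s ^ 3)).add_const
          (2 * s ^ 4 + 3 * s ^ 2 + 1)).const_mul ((1 + s ^ 2) ^ 2)
        convert this using 1 <;> (try funext y) <;> (try simp only [id_eq]) <;>
          (try push_cast) <;> (try rfl) <;> ring
      have hvne : (1 + s ^ 2) ^ 2 * (2 * s ^ 3 * (x - s) + 2 * s ^ 4 + 3 * s ^ 2 + 1) ≠ 0 :=
        (mul_pos (by positivity) hden).ne'
      have hq := hu.div hv hvne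
      exact (sphAF_hasDeriv s x).sub hq
    have hmono : MonotoneOn (fun y => sphAF s y - sphhx s (y - s)) (Set.Icc s w) := by
      apply monotoneOn_of_deriv_nonneg (convex_Icc s w)
      · intro x hx
        exact ((hder x hx.1).continuousAt).continuousWithinAt
      · intro x hx
        rw [interior_Icc] at hx
        exact (hder x hx.1.le).differentiableAt.differentiableWithinAt
      · intro x hx
        rw [interior_Icc] at hx
        have hxs : s ≤ x := hx.1.le
        rw [(hder x hxs).deriv]
        have hx0 : 0 < x := lt_trans hs hx.1
        have hden : 0 < 2 * s ^ 3 * (x - s) + 2 * s ^ 4 + 3 * s ^ 2 + 1 := by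
          have h1 : 0 ≤ 2 * s ^ 3 * (x - s) := mul_nonneg (by positivity) (sub_nonneg.2 hxs)
          have h2 : 0 < 2 * s ^ 4 + 3 * s ^ 2 + 1 := by positivity
          linarith
        have hM : 0 < 2 * s ^ 3 * x + 3 * s ^ 2 + 1 := by positivity
        have key : (sphJ x - sphJ s) -
            ((4 * s ^ 3 * (1 + 2 * s ^ 2) * (2 * (x - s))) *
                ((1 + s ^ 2) ^ 2 * (2 * s ^ 3 * (x - s) + 2 * s ^ 4 + 3 * s ^ 2 + 1)) -
              (4 * s ^ 3 * (1 + 2 * s ^ 2) * (x - s) ^ 2) * ((1 + s ^ 2) ^ 2 * (2 * s ^ 3))) /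
              ((1 + s ^ 2) ^ 2 * (2 * s ^ 3 * (x - s) + 2 * s ^ 4 + 3 * s ^ 2 + 1)) ^ 2 =
            2 * (x - s) ^ 2 *
              (x ^ 2 + 2 * s * x + 3 * s ^ 2 + 8 * s ^ 2 * x ^ 2 + 8 * s ^ 3 * x + 14 * s ^ 4 +
                25 * s ^ 4 * x ^ 2 + 10 * s ^ 5 * x + 19 * s ^ 6 + 30 * s ^ 6 * x ^ 2 +
                4 * s ^ 7 * x + 8 * s ^ 8 + 12 * s ^ 8 * x ^ 2) /
              ((1 + x ^ 2) ^ 2 * (1 + s ^ 2) ^ 2 * (2 * s ^ 3 * x + 3 * s ^ 2 + 1) ^ 2) := by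
          have e1 : 2 * s ^ 3 * (x - s) + 2 * s ^ 4 + 3 * s ^ 2 + 1 =
              2 * s ^ 3 * x + 3 * s ^ 2 + 1 := by ring
          rw [e1]
          unfold sphJ
          field_simp
          ring
        rw [key]
        positivity
    have h0 := hmono (Set.left_mem_Icc.2 h) (Set.right_mem_Icc.2 h) h
    simp only [sub_self, sphhx_zero, sphAF_self, sub_zero] at h0
    linarith

/-- Certificate inequality on the left: `hb s (s-v) ≤ A(s,v)` for `0 < v ≤ s`. -/
lemma sphhb_le_AF {s v : ℝ} (hv : 0 < v) (h : v ≤ s) : sphhb s (s - v) ≤ sphAF s v := by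
  have hs : 0 < s := lt_of_lt_of_le hv h
  rcases eq_or_lt_of_le h with rfl | hlt
  · simp [sphhb_zero, sphAF_self]
  · have hder : ∀ x : ℝ, 0 < x → x ≤ s → HasDerivAt (fun y => sphAF s y - sphhb s (s - y))
        ((sphJ x - sphJ s) -
          ((4 * s ^ 4 * (2 * (s - x) ^ 1 * (-1))) *
              ((1 + s ^ 2) ^ 2 * (2 * (s - x) + s + s ^ 3)) -
            (4 * s ^ 4 * (s - x) ^ 2) * ((1 + s ^ 2) ^ 2 * (2 * (-1)))) /
            ((1 + s ^ 2) ^ 2 * (2 * (s - x) + s + s ^ 3)) ^ 2) x := by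
      intro x hx0 hxs
      have hden : 0 < 2 * (s - x) + s + s ^ 3 := by nlinarith [pow_pos hs 3]
      have hu : HasDerivAt (fun y : ℝ => 4 * s ^ 4 * (s - y) ^ 2)
          (4 * s ^ 4 * (2 * (s - x) ^ 1 * (-1))) x := by
        have := (((hasDerivAt_id' x).const_sub s).pow 2).const_mul (4 * s ^ 4)
        convert this using 1 <;> (try funext y) <;> (try simp only [id_eq]) <;>
          (try push_cast) <;> (try rfl) <;> ring
      have hv' : HasDerivAt (fun y : ℝ => (1 + s ^ 2) ^ 2 * (2 * (s - y) + s + s ^ 3))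
          ((1 + s ^ 2) ^ 2 * (2 * (-1))) x := by
        have := ((((hasDerivAt_id' x).const_sub s).const_mul 2).add_const (s + s ^ 3)).const_mul
          ((1 + s ^ 2) ^ 2)
        convert this using 1 <;> (try funext y) <;> (try simp only [id_eq]) <;>
          (try push_cast) <;> (try rfl) <;> ring
      have hvne : (1 + s ^ 2) ^ 2 * (2 * (s - x) + s + s ^ 3) ≠ 0 :=
        (mul_pos (by positivity) hden).ne'
      have hq := hu.div hv' hvne
      exact (sphAF_hasDeriv s x).sub hq
    have hanti : AntitoneOn (fun y => sphAF s y - sphhb s (s - y)) (Set.Icc v s) := by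
      apply antitoneOn_of_deriv_nonpos (convex_Icc v s)
      · intro x hx
        exact ((hder x (lt_of_lt_of_le hv hx.1) hx.2).continuousAt).continuousWithinAt
      · intro x hx
        rw [interior_Icc] at hx
        exact (hder x (lt_trans hv hx.1) hx.2.le).differentiableAt.differentiableWithinAt
      · intro x hx
        rw [interior_Icc] at hx
        have hx0 : 0 < x := lt_trans hv hx.1
        have hxs : x ≤ s := hx.2.le
        rw [(hder x hx0 hxs).deriv]
        have hden : 0 < 2 * (s - x) + s + s ^ 3 := by nlinarith [pow_pos hs 3]
        have hM : 0 < 3 * s - 2 * x + s ^ 3 := by nlinarith [pow_pos hs 3]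
        have hsx3 : 0 ≤ s + s ^ 3 - x := by nlinarith [pow_pos hs 3]
        have key : (sphJ x - sphJ s) -
            ((4 * s ^ 4 * (2 * (s - x) ^ 1 * (-1))) *
                ((1 + s ^ 2) ^ 2 * (2 * (s - x) + s + s ^ 3)) -
              (4 * s ^ 4 * (s - x) ^ 2) * ((1 + s ^ 2) ^ 2 * (2 * (-1)))) /
              ((1 + s ^ 2) ^ 2 * (2 * (s - x) + s + s ^ 3)) ^ 2 =
            -(2 * (s - x) ^ 2 *
              (4 * x ^ 3 * (1 + s ^ 2) ^ 2 * (s + s ^ 3 - x) + 3 * s ^ 2 * x ^ 2 + 2 * s ^ 3 * x +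
                s ^ 4 + 8 * s ^ 4 * x ^ 2 + 4 * s ^ 5 * x + 2 * s ^ 6 + 7 * s ^ 6 * x ^ 2 +
                2 * s ^ 7 * x + s ^ 8 + 2 * s ^ 8 * x ^ 2) /
              ((1 + x ^ 2) ^ 2 * (1 + s ^ 2) ^ 2 * (3 * s - 2 * x + s ^ 3) ^ 2)) := by
          have e1 : 2 * (s - x) + s + s ^ 3 = 3 * s - 2 * x + s ^ 3 := by ring
          rw [e1]
          have hMne : s * 3 - 2 * x + s ^ 3 ≠ 0 := by linarith
          unfold sphJ
          field_simp
          ring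
        rw [key]
        have hQ : 0 ≤ 4 * x ^ 3 * (1 + s ^ 2) ^ 2 * (s + s ^ 3 - x) + 3 * s ^ 2 * x ^ 2 +
            2 * s ^ 3 * x + s ^ 4 + 8 * s ^ 4 * x ^ 2 + 4 * s ^ 5 * x + 2 * s ^ 6 +
            7 * s ^ 6 * x ^ 2 + 2 * s ^ 7 * x + s ^ 8 + 2 * s ^ 8 * x ^ 2 := by positivity
        apply neg_nonpos_of_nonneg
        positivity
    have h0 := hanti (Set.left_mem_Icc.2 h) (Set.right_mem_Icc.2 h) h
    simp only [sub_self, sphhb_zero, sphAF_self, sub_zero, zero_sub] at h0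
    linarith

set_option maxHeartbeats 1600000 in
/-- The coupling inequality between the two certificates. -/
lemma sphY {s a b : ℝ} (hs : 0 < s) (ha : 0 < a) (hb : 0 < b) (hbs : b < s) :
    sphSS s / 2 * a * b < sphhx s a + sphhb s b := by
  have hM : 0 < 2 * s ^ 3 * a + 2 * s ^ 4 + 3 * s ^ 2 + 1 := by positivity
  have hN : 0 < 2 * b + s + s ^ 3 := by positivity
  have hsb : 0 ≤ s - b := sub_nonneg.2 hbs.le
  have hP : 0 < s * (1 + s ^ 2) ^ 2 * (1 + 2 * s ^ 2) := by positivity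
  -- a-certificate positivity
  have ha0 : 0 < s * (1 + s ^ 2) ^ 2 * (1 + 2 * s ^ 2) +
      2 * (1 + s ^ 2) * (1 + 2 * s ^ 2 - s ^ 4) * b - 4 * s ^ 3 * b ^ 2 := by
    have key : s * (s * (1 + s ^ 2) ^ 2 * (1 + 2 * s ^ 2) +
        2 * (1 + s ^ 2) * (1 + 2 * s ^ 2 - s ^ 4) * b - 4 * s ^ 3 * b ^ 2) =
        (s - b) * (s * (1 + s ^ 2) ^ 2 * (1 + 2 * s ^ 2)) +
        b * (s * (3 + 10 * s ^ 2 + 3 * s ^ 4)) + 4 * s ^ 4 * (b * (s - b)) := by ring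
    have h1 : 0 < s * (s * (1 + s ^ 2) ^ 2 * (1 + 2 * s ^ 2) +
        2 * (1 + s ^ 2) * (1 + 2 * s ^ 2 - s ^ 4) * b - 4 * s ^ 3 * b ^ 2) := by
      rw [key]
      have t1 : 0 ≤ (s - b) * (s * (1 + s ^ 2) ^ 2 * (1 + 2 * s ^ 2)) := mul_nonneg hsb hP.le
      have t2 : 0 < b * (s * (3 + 10 * s ^ 2 + 3 * s ^ 4)) := mul_pos hb (by positivity)
      have t3 : 0 ≤ 4 * s ^ 4 * (b * (s - b)) :=
        mul_nonneg (by positivity) (mul_nonneg hb.le hsb)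
      linarith
    rcases mul_pos_iff.1 h1 with ⟨_, h2⟩ | ⟨h2, _⟩
    · exact h2
    · linarith
  -- W positivity
  have hW : 0 < 3 * (s * (1 + s ^ 2) ^ 2 * (1 + 2 * s ^ 2)) ^ 2 +
      2 * (s * (1 + s ^ 2) ^ 2 * (1 + 2 * s ^ 2)) *
        (2 * (1 + s ^ 2) * (1 + 2 * s ^ 2 - s ^ 4)) * b - 4 * (1 + s ^ 2) ^ 6 * b ^ 2 := by
    have key : s * (3 * (s * (1 + s ^ 2) ^ 2 * (1 + 2 * s ^ 2)) ^ 2 +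
        2 * (s * (1 + s ^ 2) ^ 2 * (1 + 2 * s ^ 2)) *
          (2 * (1 + s ^ 2) * (1 + 2 * s ^ 2 - s ^ 4)) * b - 4 * (1 + s ^ 2) ^ 6 * b ^ 2) =
        (s - b) * (3 * (s * (1 + s ^ 2) ^ 2 * (1 + 2 * s ^ 2)) ^ 2) +
        b * (s ^ 2 * (3 + 28 * s ^ 2 + 90 * s ^ 4 + 132 * s ^ 6 + 91 * s ^ 8 + 24 * s ^ 10)) +
        4 * (1 + s ^ 2) ^ 6 * s * (b * (s - b)) := by ring
    have h1 : 0 < s * (3 * (s * (1 + s ^ 2) ^ 2 * (1 + 2 * s ^ 2)) ^ 2 +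
        2 * (s * (1 + s ^ 2) ^ 2 * (1 + 2 * s ^ 2)) *
          (2 * (1 + s ^ 2) * (1 + 2 * s ^ 2 - s ^ 4)) * b - 4 * (1 + s ^ 2) ^ 6 * b ^ 2) := by
      rw [key]
      have t1 : 0 ≤ (s - b) * (3 * (s * (1 + s ^ 2) ^ 2 * (1 + 2 * s ^ 2)) ^ 2) :=
        mul_nonneg hsb (by positivity)
      have t2 : 0 < b * (s ^ 2 *
          (3 + 28 * s ^ 2 + 90 * s ^ 4 + 132 * s ^ 6 + 91 * s ^ 8 + 24 * s ^ 10)) :=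
        mul_pos hb (by positivity)
      have t3 : 0 ≤ 4 * (1 + s ^ 2) ^ 6 * s * (b * (s - b)) :=
        mul_nonneg (by positivity) (mul_nonneg hb.le hsb)
      linarith
    rcases mul_pos_iff.1 h1 with ⟨_, h2⟩ | ⟨h2, _⟩
    · exact h2
    · linarith
  -- E positivity
  have hE : 0 < s * (1 + s ^ 2) ^ 2 * (1 + 2 * s ^ 2) * (a ^ 2 + b ^ 2 - a * b) +
      2 * (1 + s ^ 2) * (1 + 2 * s ^ 2 - s ^ 4) * a * b * (a - b) -
      4 * s ^ 3 * a ^ 2 * b ^ 2 := by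
    have key : 4 * (s * (1 + s ^ 2) ^ 2 * (1 + 2 * s ^ 2) +
        2 * (1 + s ^ 2) * (1 + 2 * s ^ 2 - s ^ 4) * b - 4 * s ^ 3 * b ^ 2) *
        (s * (1 + s ^ 2) ^ 2 * (1 + 2 * s ^ 2) * (a ^ 2 + b ^ 2 - a * b) +
          2 * (1 + s ^ 2) * (1 + 2 * s ^ 2 - s ^ 4) * a * b * (a - b) -
          4 * s ^ 3 * a ^ 2 * b ^ 2) =
        (2 * (s * (1 + s ^ 2) ^ 2 * (1 + 2 * s ^ 2) +
            2 * (1 + s ^ 2) * (1 + 2 * s ^ 2 - s ^ 4) * b - 4 * s ^ 3 * b ^ 2) * a -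
          b * (s * (1 + s ^ 2) ^ 2 * (1 + 2 * s ^ 2) +
            2 * (1 + s ^ 2) * (1 + 2 * s ^ 2 - s ^ 4) * b)) ^ 2 +
        b ^ 2 * (3 * (s * (1 + s ^ 2) ^ 2 * (1 + 2 * s ^ 2)) ^ 2 +
          2 * (s * (1 + s ^ 2) ^ 2 * (1 + 2 * s ^ 2)) *
            (2 * (1 + s ^ 2) * (1 + 2 * s ^ 2 - s ^ 4)) * b - 4 * (1 + s ^ 2) ^ 6 * b ^ 2) := by
      ring
    have h5 : 0 < 4 * (s * (1 + s ^ 2) ^ 2 * (1 + 2 * s ^ 2) +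
        2 * (1 + s ^ 2) * (1 + 2 * s ^ 2 - s ^ 4) * b - 4 * s ^ 3 * b ^ 2) *
        (s * (1 + s ^ 2) ^ 2 * (1 + 2 * s ^ 2) * (a ^ 2 + b ^ 2 - a * b) +
          2 * (1 + s ^ 2) * (1 + 2 * s ^ 2 - s ^ 4) * a * b * (a - b) -
          4 * s ^ 3 * a ^ 2 * b ^ 2) := by
      rw [key]
      have t1 : 0 ≤ (2 * (s * (1 + s ^ 2) ^ 2 * (1 + 2 * s ^ 2) +
            2 * (1 + s ^ 2) * (1 + 2 * s ^ 2 - s ^ 4) * b - 4 * s ^ 3 * b ^ 2) * a -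
          b * (s * (1 + s ^ 2) ^ 2 * (1 + 2 * s ^ 2) +
            2 * (1 + s ^ 2) * (1 + 2 * s ^ 2 - s ^ 4) * b)) ^ 2 := sq_nonneg _
      have t2 : 0 < b ^ 2 * (3 * (s * (1 + s ^ 2) ^ 2 * (1 + 2 * s ^ 2)) ^ 2 +
          2 * (s * (1 + s ^ 2) ^ 2 * (1 + 2 * s ^ 2)) *
            (2 * (1 + s ^ 2) * (1 + 2 * s ^ 2 - s ^ 4)) * b - 4 * (1 + s ^ 2) ^ 6 * b ^ 2) :=
        mul_pos (by positivity) hW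
      linarith
    have h6 : 0 < 4 * (s * (1 + s ^ 2) ^ 2 * (1 + 2 * s ^ 2) +
        2 * (1 + s ^ 2) * (1 + 2 * s ^ 2 - s ^ 4) * b - 4 * s ^ 3 * b ^ 2) := by linarith
    rcases mul_pos_iff.1 h5 with ⟨_, h7⟩ | ⟨h7, _⟩
    · exact h7
    · linarith
  -- assemble
  have hgoal : sphhx s a + sphhb s b - sphSS s / 2 * a * b =
      4 * s ^ 3 * (s * (1 + s ^ 2) ^ 2 * (1 + 2 * s ^ 2) * (a ^ 2 + b ^ 2 - a * b) +
        2 * (1 + s ^ 2) * (1 + 2 * s ^ 2 - s ^ 4) * a * b * (a - b) -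
        4 * s ^ 3 * a ^ 2 * b ^ 2) /
      ((1 + s ^ 2) ^ 3 * ((2 * s ^ 3 * a + 2 * s ^ 4 + 3 * s ^ 2 + 1) * (2 * b + s + s ^ 3))) := by
    unfold sphhx sphhb sphSS
    field_simp
    ring
  have hpos : 0 < 4 * s ^ 3 * (s * (1 + s ^ 2) ^ 2 * (1 + 2 * s ^ 2) * (a ^ 2 + b ^ 2 - a * b) +
      2 * (1 + s ^ 2) * (1 + 2 * s ^ 2 - s ^ 4) * a * b * (a - b) -
      4 * s ^ 3 * a ^ 2 * b ^ 2) /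
      ((1 + s ^ 2) ^ 3 * ((2 * s ^ 3 * a + 2 * s ^ 4 + 3 * s ^ 2 + 1) * (2 * b + s + s ^ 3))) :=
    div_pos (mul_pos (by positivity) hE) (by positivity)
  linarith [hgoal.ge, hgoal.le]

/-- The mixed case `u > s > v` is strictly positive. -/
lemma sphMix {s u v : ℝ} (hs : 0 < s) (hv : 0 < v) (hu : s < u) (hvs : v < s) :
    0 < sphAF s u + sphAF s v + sphSS s / 2 * (u - s) * (v - s) := by
  have h1 := sphhx_le_AF hs hu.le
  have h2 := sphhb_le_AF hv hvs.le
  have h3 := sphY hs (sub_pos.2 hu) (sub_pos.2 hvs) (by linarith : s - v < s)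
  have h4 : sphSS s / 2 * (u - s) * (v - s) = -(sphSS s / 2 * (u - s) * (s - v)) := by ring
  linarith

/-- Core inequality: for `s, u, v > 0`,
`A(s,u) + A(s,v) + (S₀(s)/2)(u-s)(v-s) ≥ 0`, with equality iff `u = v = s`. -/
lemma sphCore {s u v : ℝ} (hs : 0 < s) (hu : 0 < u) (hv : 0 < v) :
    0 ≤ sphAF s u + sphAF s v + sphSS s / 2 * (u - s) * (v - s) ∧
    (sphAF s u + sphAF s v + sphSS s / 2 * (u - s) * (v - s) = 0 ↔ u = s ∧ v = s) := by
  have hSS : 0 < sphSS s := by unfold sphSS; positivity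
  have hzero : u = s → v = s → sphAF s u + sphAF s v + sphSS s / 2 * (u - s) * (v - s) = 0 := by
    rintro rfl rfl
    simp [sphAF_self]
  have hpos : ¬(u = s ∧ v = s) →
      0 < sphAF s u + sphAF s v + sphSS s / 2 * (u - s) * (v - s) := by
    intro hne
    rcases lt_trichotomy u s with hu' | hu' | hu' <;> rcases lt_trichotomy v s with hv' | hv' | hv'
    · -- u < s, v < s
      have t1 := sphAF_pos hs hu hu'.ne
      have t2 := sphAF_pos hs hv hv'.ne
      have t3 : 0 < sphSS s / 2 * (u - s) * (v - s) :=
        mul_pos_of_neg_of_neg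
          (mul_neg_of_pos_of_neg (by positivity) (sub_neg.2 hu')) (sub_neg.2 hv')
      linarith
    · -- u < s, v = s
      have t1 := sphAF_pos hs hu hu'.ne
      rw [hv', sphAF_self]
      have e : sphSS s / 2 * (u - s) * (s - s) = 0 := by ring
      linarith
    · -- u < s, v > s : mixed (swap roles)
      have := sphMix hs hu hv' hu'
      have e : sphSS s / 2 * (v - s) * (u - s) = sphSS s / 2 * (u - s) * (v - s) := by ring
      linarith
    · -- u = s, v < s
      have t2 := sphAF_pos hs hv hv'.ne
      rw [hu', sphAF_self]
      have e : sphSS s / 2 * (s - s) * (v - s) = 0 := by ring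
      linarith
    · -- u = s, v = s : contradiction
      exact absurd ⟨hu', hv'⟩ hne
    · -- u = s, v > s
      have t2 := sphAF_pos hs hv hv'.ne'
      rw [hu', sphAF_self]
      have e : sphSS s / 2 * (s - s) * (v - s) = 0 := by ring
      linarith
    · -- u > s, v < s : mixed
      exact sphMix hs hv hu' hv'
    · -- u > s, v = s
      have t1 := sphAF_pos hs hu hu'.ne'
      rw [hv', sphAF_self]
      have e : sphSS s / 2 * (u - s) * (s - s) = 0 := by ring
      linarith
    · -- u > s, v > s
      have t1 := sphAF_pos hs hu hu'.ne'
      have t2 := sphAF_pos hs hv hv'.ne'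
      have t3 : 0 < sphSS s / 2 * (u - s) * (v - s) :=
        mul_pos (mul_pos (by positivity) (sub_pos.2 hu')) (sub_pos.2 hv')
      linarith
  constructor
  · by_cases hc : u = s ∧ v = s
    · exact (hzero hc.1 hc.2).ge
    · exact (hpos hc).le
  · constructor
    · intro h0
      by_contra hc
      exact absurd h0 (hpos hc).ne'
    · rintro ⟨rfl, rfl⟩
      exact hzero rfl rfl

/-- The master identity relating `sphH` to the reduced core expression. -/
lemma sphGt_diag (p : ℝ) (hp : 0 < p) :
    sphGt (1 / (3 * p)) p p = 4 / 3 * arctan (1 / (3 * p)) + 4 / 3 * p / (9 * p ^ 2 + 1) := by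
  unfold sphGt sphS0 sphSm1 sphSm2
  have hp0 : p ≠ 0 := hp.ne'
  field_simp
  ring

lemma sphAF_inv (t w : ℝ) (ht : 0 < t) :
    sphAF (1 / t) w = 3 * (π / 2 - arctan t) - 3 * arctan w + w / (1 + w ^ 2) - t / (1 + t ^ 2)
      + (2 * t ^ 4 + 4 * t ^ 2) / (1 + t ^ 2) ^ 2 * (w - 1 / t) := by
  unfold sphAF sphJ
  have h1t : arctan (1 / t) = π / 2 - arctan t := by
    rw [one_div]; exact arctan_inv_of_pos ht
  rw [h1t]
  have ht0 : t ≠ 0 := ht.ne'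
  have e1 : (1 / t) / (1 + (1 / t) ^ 2) = t / (1 + t ^ 2) := by
    field_simp; ring
  rw [e1]
  have e2 : -(2 + 4 * (1 / t) ^ 2) / (1 + (1 / t) ^ 2) ^ 2 =
      -((2 * t ^ 4 + 4 * t ^ 2) / (1 + t ^ 2) ^ 2) := by
    field_simp; ring
  rw [e2]
  ring

lemma sphSS_inv (t : ℝ) (ht : 0 < t) : sphSS (1 / t) = sphS0 t := by
  unfold sphSS sphS0
  have ht0 : t ≠ 0 := ht.ne'
  field_simp
  ring

set_option maxHeartbeats 1600000 in
lemma sphH_eq (t p q : ℝ) (ht : 0 < t) (hp : 0 < p) (hq : 0 < q) :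
    sphH t p q = 4 / 9 * (sphAF (1 / t) (3 * p) + sphAF (1 / t) (3 * q) +
      sphSS (1 / t) / 2 * (3 * p - 1 / t) * (3 * q - 1 / t)) := by
  have h3p : arctan (1 / (3 * p)) = π / 2 - arctan (3 * p) := by
    rw [one_div]; exact arctan_inv_of_pos (by positivity)
  have h3q : arctan (1 / (3 * q)) = π / 2 - arctan (3 * q) := by
    rw [one_div]; exact arctan_inv_of_pos (by positivity)
  rw [sphSS_inv t ht, sphAF_inv t (3 * p) ht, sphAF_inv t (3 * q) ht]
  unfold sphH
  rw [sphGt_diag p hp, sphGt_diag q hq, h3p, h3q]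
  unfold sphGt sphS0 sphSm1 sphSm2
  have ht0 : t ≠ 0 := ht.ne'
  have hp0 : p ≠ 0 := hp.ne'
  have hq0 : q ≠ 0 := hq.ne'
  field_simp
  ring

/-- `H ≥ 0` on `(0, ∞)³`, with equality iff `p = q` and `t = 1/(3p)`. -/
theorem sphH_nonneg (t p q : ℝ) (ht : 0 < t) (hp : 0 < p) (hq : 0 < q) :
    0 ≤ sphH t p q ∧ (sphH t p q = 0 ↔ p = q ∧ t = 1 / (3 * p)) := by
  have hs : 0 < 1 / t := by positivity
  obtain ⟨hnn, hiff⟩ := sphCore (s := 1 / t) (u := 3 * p) (v := 3 * q) hs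
    (by positivity) (by positivity)
  have heq := sphH_eq t p q ht hp hq
  constructor
  · rw [heq]; linarith
  · rw [heq]
    constructor
    · intro h0
      have hX : sphAF (1 / t) (3 * p) + sphAF (1 / t) (3 * q) +
          sphSS (1 / t) / 2 * (3 * p - 1 / t) * (3 * q - 1 / t) = 0 := by linarith
      obtain ⟨h1, h2⟩ := hiff.1 hX
      constructor
      · have : (3 : ℝ) * p = 3 * q := by rw [h1, h2]
        linarith
      · rw [eq_div_iff (by positivity : (3 : ℝ) * p ≠ 0)]
        have h1' : 3 * p * t = 1 := by
          rw [h1]; field_simp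
        linarith
    · rintro ⟨rfl, rfl⟩
      have e1 : (3 : ℝ) * p = 1 / (1 / (3 * p)) := (one_div_one_div (3 * p)).symm
      have hX := hiff.2 ⟨e1, e1⟩
      rw [hX]
      norm_num
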